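/- arXiv:2503.02740 — 6 statements merged into one kernel-verified Lean document; each statement's English description precedes it below -/
import Mathlib

section
/- Let f be a voting rule on a domain D that satisfies false-name-proofness and participation. Let N be a society, i ∈ N a voter, and P_N ∈ D^N a profile. If i* is a voter with i* ∉ N and P_{i*} ∈ D is a preference with P_{i*} = P_i, then f(P_N) = f(P_{N∪{i*}}), where P_{N∪{i*}} is the profile over N∪{i*} that agrees with P_N on N and gives i* the preference P_{i*}. -/
/-! ## Basic framework: preferences, profiles, voting rules, axioms -/

/-- A preference is a strict linear order on the set `A` of alternatives, encoded as a
`LinearOrder` structure on `A`; alternative `x` is strictly preferred to `y` iff `y < x`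
(i.e. "greater is better"). -/
abbrev Pref (A : Type*) := LinearOrder A

/-- Strict preference: `x` is strictly preferred to `y` under `p`. -/
def Pref.pref {A : Type*} (p : Pref A) (x y : A) : Prop := p.lt y x

/-- Weak preference (the weak counterpart `R` of the strict preference `P`):
`x` is weakly preferred to `y` under `p`. -/
def Pref.wpref {A : Type*} (p : Pref A) (x y : A) : Prop := p.le y x

/-- The top (most preferred) alternative of a preference. -/
noncomputable def Pref.top {A : Type*} [Fintype A] [Nonempty A] (p : Pref A) : A :=
  @Finset.max' A p Finset.univ Finset.univ_nonempty

/-- The bottom (least preferred) alternative of a preference. -/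
noncomputable def Pref.bot {A : Type*} [Fintype A] [Nonempty A] (p : Pref A) : A :=
  @Finset.min' A p Finset.univ Finset.univ_nonempty

/-- A profile over the society `N` (a finite set of voters, indexed by naturals):
it assigns a preference to each member of `N`. -/
abbrev Profile (A : Type*) (N : Finset ℕ) := (i : ℕ) → i ∈ N → Pref A

/-- The profile `P` takes values in the domain `D` of preferences. -/
def Profile.inDomain {A : Type*} {N : Finset ℕ} (P : Profile A N) (D : Set (Pref A)) : Prop :=
  ∀ i (hi : i ∈ N), P i hi ∈ D

/-- A (variable-population) voting rule: it assigns an alternative to every society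
together with a profile over it. -/
abbrev Rule (A : Type*) := (N : Finset ℕ) → Profile A N → A

/-- Ontoness on the domain `D`: for every society and every alternative, some
`D`-profile realizes that alternative. -/
def OntoOn {A : Type*} (D : Set (Pref A)) (f : Rule A) : Prop :=
  ∀ N : Finset ℕ, N.Nonempty → ∀ a : A, ∃ P : Profile A N, P.inDomain D ∧ f N P = a

/-- Tops-onliness on the domain `D`: two `D`-profiles with the same tops get the
same outcome. -/
def TopsOnlyOn {A : Type*} [Fintype A] [Nonempty A] (D : Set (Pref A)) (f : Rule A) : Prop :=
  ∀ N : Finset ℕ, N.Nonempty → ∀ P P' : Profile A N, P.inDomain D → P'.inDomain D →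
    (∀ i (hi : i ∈ N), (P i hi).top = (P' i hi).top) → f N P = f N P'

/-- False-name-proofness on the domain `D`: if a voter `i` of the society `N` casts,
under fresh identities `N'`, extra votes identical to her own preference, the outcome
does not improve for her. -/
def FalseNameProofOn {A : Type*} (D : Set (Pref A)) (f : Rule A) : Prop :=
  ∀ N N' : Finset ℕ, N.Nonempty → N'.Nonempty → Disjoint N N' →
    ∀ P : Profile A (N ∪ N'), P.inDomain D →
      ∀ i (hi : i ∈ N),
        (∀ j (hj : j ∈ N'),
            P j (Finset.mem_union_right N hj) = P i (Finset.mem_union_left N' hi)) →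
        (P i (Finset.mem_union_left N' hi)).wpref
          (f N (fun j hj => P j (Finset.mem_union_left N' hj)))
          (f (N ∪ N') P)

/-- Participation on the domain `D`: no voter gains by abstaining. -/
def ParticipationOn {A : Type*} (D : Set (Pref A)) (f : Rule A) : Prop :=
  ∀ N : Finset ℕ, 2 ≤ N.card → ∀ P : Profile A N, P.inDomain D →
    ∀ i (hi : i ∈ N),
      (P i hi).wpref (f N P) (f (N.erase i) (fun j hj => P j (Finset.mem_of_mem_erase hj)))

lemma mem_of_mem_image_perm {σ : Equiv.Perm ℕ} {N : Finset ℕ} {j : ℕ}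
    (hj : j ∈ N.image σ) : σ.symm j ∈ N := by
  obtain ⟨i, hi, rfl⟩ := Finset.mem_image.mp hj
  simpa using hi

/-- The permuted profile `σ(P_N)` over the society `σ(N)`: voter `σ i` gets the
preference `P i`. -/
def permProfile {A : Type*} (σ : Equiv.Perm ℕ) {N : Finset ℕ} (P : Profile A N) :
    Profile A (N.image σ) :=
  fun j hj => P (σ.symm j) (mem_of_mem_image_perm hj)

/-- Anonymity on the domain `D`: permuting the voters' identities does not change
the outcome. -/
def AnonymousOn {A : Type*} (D : Set (Pref A)) (f : Rule A) : Prop :=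
  ∀ (σ : Equiv.Perm ℕ) (N : Finset ℕ), N.Nonempty → ∀ P : Profile A N, P.inDomain D →
    f (N.image σ) (permProfile σ P) = f N P

/-- Relabeling a preference along a permutation `γ` of the alternatives: in the new
preference, `γ x` is strictly preferred to `γ y` iff `x` was strictly preferred to `y`. -/
noncomputable def Pref.relabel {A : Type*} (p : Pref A) (γ : Equiv.Perm A) : Pref A :=
  @LinearOrder.lift' A A p γ.symm γ.symm.injective

/-- Neutrality on the domain `D`: relabeling the alternatives by a permutation `γ`
relabels the outcome accordingly. -/
def NeutralOn {A : Type*} (D : Set (Pref A)) (f : Rule A) : Prop :=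
  ∀ (γ : Equiv.Perm A) (N : Finset ℕ), N.Nonempty → ∀ P : Profile A N, P.inDomain D →
    γ (f N P) = f N (fun i hi => (P i hi).relabel γ)


lemma rule_congr {A : Type*} (f : Rule A) {N₁ N₂ : Finset ℕ} (h : N₁ = N₂)
    (P₁ : Profile A N₁) (P₂ : Profile A N₂)
    (hP : ∀ j (hj : j ∈ N₁), P₁ j hj = P₂ j (h ▸ hj)) : f N₁ P₁ = f N₂ P₂ := by
  subst h
  congr 1
  funext j hj
  exact hP j hj

/-- If a voting rule on domain `D` satisfies false-name-proofness and
participation, then adding to the society a fresh voter `i*` whose preference equals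
that of an existing voter `i` does not change the outcome. -/
theorem stmt_0 {A : Type*} (D : Set (Pref A)) (f : Rule A)
    (hfnp : FalseNameProofOn D f) (hpart : ParticipationOn D f)
    (N : Finset ℕ) (P : Profile A N) (hP : P.inDomain D)
    (i : ℕ) (hi : i ∈ N) (istar : ℕ) (histar : istar ∉ N)
    (Pstar : Pref A) (hPstarD : Pstar ∈ D) (hPstar : Pstar = P i hi) :
    f N P = f (N ∪ {istar}) (fun j hj => if h : j ∈ N then P j h else Pstar) := by
  set M := N ∪ {istar} with hM
  set Q : Profile A M := (fun j hj => if h : j ∈ N then P j h else Pstar) with hQ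
  have hQD : Q.inDomain D := by
    intro j hj
    by_cases h : j ∈ N
    · simpa [hQ, h] using hP j h
    · simpa [hQ, h] using hPstarD
  have hNne : N.Nonempty := ⟨i, hi⟩
  have hdisj : Disjoint N ({istar} : Finset ℕ) := by simpa using histar
  have hrestr : (fun j (hj : j ∈ N) => Q j (Finset.mem_union_left _ hj)) = P := by
    funext j hj
    simp [hQ, hj]
  have h1 := hfnp N {istar} hNne ⟨istar, Finset.mem_singleton_self istar⟩ hdisj Q hQD i hi
    (by intro j hj
        have : j = istar := Finset.mem_singleton.mp hj
        subst this
        simp [hQ, histar, hPstar, hi])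
  rw [hrestr] at h1
  have hQi : Q i (Finset.mem_union_left _ hi) = P i hi := by simp [hQ, hi]
  rw [hQi] at h1
  have hMcard : 2 ≤ M.card := by
    have : M.card = N.card + 1 := by
      rw [hM, Finset.card_union_of_disjoint hdisj, Finset.card_singleton]
    have hN1 : 1 ≤ N.card := Finset.card_pos.mpr hNne
    omega
  have histarM : istar ∈ M := Finset.mem_union_right _ (Finset.mem_singleton_self istar)
  have h2 := hpart M hMcard Q hQD istar histarM
  have herase : M.erase istar = N := by
    ext j
    simp only [hM, Finset.mem_erase, Finset.mem_union, Finset.mem_singleton]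
    constructor
    · rintro ⟨hne, hj | rfl⟩
      · exact hj
      · exact absurd rfl hne
    · intro hj
      exact ⟨fun h => histar (h ▸ hj), Or.inl hj⟩
  have h3 : f (M.erase istar) (fun j hj => Q j (Finset.mem_of_mem_erase hj)) = f N P := by
    apply rule_congr f herase
    intro j hj
    have hjN : j ∈ N := herase ▸ hj
    simp [hQ, hjN]
  rw [h3] at h2
  have hQistar : Q istar histarM = P i hi := by simp [hQ, histar, hPstar]
  rw [hQistar] at h2
  unfold Pref.wpref at h1 h2
  exact @le_antisymm A (P i hi).toPartialOrder _ _ h2 h1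
end

section
/- Let f be a voting rule on a domain D that satisfies false-name-proofness and participation. Let N be a society, i ∈ N a voter, and P_N ∈ D^N a profile. If i* is a voter with i* ∉ N and P_{i*} ∈ D is a preference with P_{i*} = P_i, then f(P_{(N∪{i*})\{i}}) = f(P_N), where P_{(N∪{i*})\{i}} is the profile over (N∪{i*})\{i} that agrees with P_N on N\{i} and gives i* the preference P_{i*}. -/
/-- If a voting rule on domain `D` satisfies false-name-proofness and
participation, then replacing a voter `i` of the society by a fresh voter `i*` with the
same preference does not change the outcome. -/
theorem stmt_1 {A : Type*} (D : Set (Pref A)) (f : Rule A)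
    (hfnp : FalseNameProofOn D f) (hpart : ParticipationOn D f)
    (N : Finset ℕ) (P : Profile A N) (hP : P.inDomain D)
    (i : ℕ) (hi : i ∈ N) (istar : ℕ) (histar : istar ∉ N)
    (Pstar : Pref A) (hPstarD : Pstar ∈ D) (hPstar : Pstar = P i hi) :
    f ((N ∪ {istar}).erase i)
        (fun j hj => if h : j ∈ N then P j h else Pstar) = f N P := by
  classical
  set g : ℕ → Pref A := fun j => if h : j ∈ N then P j h else Pstar with hg
  have hne : istar ≠ i := fun h => histar (h ▸ hi)
  have hgi : g i = P i hi := dif_pos hi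
  have hgistar : g istar = Pstar := dif_neg histar
  have hgD : ∀ (S : Finset ℕ), (Profile.inDomain (fun j (_ : j ∈ S) => g j) D) := by
    intro S j hj
    by_cases h : j ∈ N
    · simpa [g, dif_pos h] using hP j h
    · simpa [g, dif_neg h] using hPstarD
  have hPg : (fun j (hj : j ∈ N) => g j) = P := by
    funext j hj; exact dif_pos hj
  have hconst : ∀ (S S' : Finset ℕ), S = S' →
      f S (fun j (_ : j ∈ S) => g j) = f S' (fun j (_ : j ∈ S') => g j) := by
    rintro S S' rfl; rfl
  set M : Finset ℕ := (N ∪ {istar}).erase i with hM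
  have histarM : istar ∈ M := Finset.mem_erase.mpr ⟨hne, Finset.mem_union_right _ (Finset.mem_singleton_self _)⟩
  have hEfull : M ∪ {i} = N ∪ {istar} := by
    ext j
    simp only [hM, Finset.mem_union, Finset.mem_erase, Finset.mem_singleton]
    constructor
    · rintro (⟨_, h⟩ | rfl)
      · exact h
      · exact Or.inl hi
    · intro h
      by_cases hji : j = i
      · exact Or.inr hji
      · exact Or.inl ⟨hji, h⟩
  have hEN : (N ∪ {istar}).erase istar = N := by
    ext j
    simp only [Finset.mem_erase, Finset.mem_union, Finset.mem_singleton]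
    constructor
    · rintro ⟨hj, (h | rfl)⟩
      · exact h
      · exact absurd rfl hj
    · intro h; exact ⟨fun e => histar (e ▸ h), Or.inl h⟩
  have hcard : 2 ≤ (N ∪ {istar}).card := by
    have : ({i, istar} : Finset ℕ) ⊆ N ∪ {istar} := by
      intro j hj
      rcases Finset.mem_insert.mp hj with rfl | hj
      · exact Finset.mem_union_left _ hi
      · exact Finset.mem_union_right _ hj
    calc 2 = ({i, istar} : Finset ℕ).card := by
            rw [Finset.card_insert_of_notMem (by simpa using hne.symm), Finset.card_singleton]
      _ ≤ _ := Finset.card_le_card this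
  -- Chain 1: FNP with base N, clones {istar}
  have h1 : (g i).wpref (f N P) (f (N ∪ {istar}) (fun j _ => g j)) := by
    have := hfnp N {istar} ⟨i, hi⟩ ⟨istar, Finset.mem_singleton_self _⟩
      (Finset.disjoint_singleton_right.mpr histar)
      (fun j _ => g j) (hgD _) i hi
      (fun j hj => by
        rcases Finset.mem_singleton.mp hj with rfl
        simp [hgistar, hgi, hPstar])
    rwa [hPg] at this
  -- Participation removing i from N ∪ {istar}
  have h2 : (g i).wpref (f (N ∪ {istar}) (fun j _ => g j)) (f M (fun j _ => g j)) := by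
    have := hpart (N ∪ {istar}) hcard (fun j _ => g j) (hgD _) i (Finset.mem_union_left _ hi)
    exact this
  -- Chain 2: FNP with base M, clones {i}
  have h3 : (g istar).wpref (f M (fun j _ => g j)) (f (N ∪ {istar}) (fun j _ => g j)) := by
    have := hfnp M {i} ⟨istar, histarM⟩ ⟨i, Finset.mem_singleton_self _⟩
      (Finset.disjoint_singleton_right.mpr (Finset.notMem_erase i _))
      (fun j _ => g j) (hgD _) istar histarM
      (fun j hj => by
        rcases Finset.mem_singleton.mp hj with rfl
        simp [hgistar, hgi, hPstar])
    rwa [hconst (M ∪ {i}) (N ∪ {istar}) hEfull] at this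
  -- Participation removing istar from N ∪ {istar}
  have h4 : (g istar).wpref (f (N ∪ {istar}) (fun j _ => g j)) (f N P) := by
    have := hpart (N ∪ {istar}) hcard (fun j _ => g j) (hgD _) istar
      (Finset.mem_union_right _ (Finset.mem_singleton_self _))
    rwa [hconst _ N hEN, hPg] at this
  -- Combine via antisymmetry in the linear order g i = g istar
  have hgeq : g istar = g i := by rw [hgistar, hgi, hPstar]
  rw [hgeq] at h3 h4
  have hle1 : (g i).le (f M (fun j _ => g j)) (f N P) :=
    (g i).le_trans _ _ _ h2 h1
  have hle2 : (g i).le (f N P) (f M (fun j _ => g j)) :=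
    (g i).le_trans _ _ _ h4 h3
  exact (g i).le_antisymm _ _ hle1 hle2
end

section
/- Every voting rule f on a domain D that satisfies false-name-proofness and participation also satisfies anonymity. -/
section Aux

variable {A : Type*} {D : Set (Pref A)} {f : Rule A}

/-- Replacing a voter `i` by a fresh clone `j` does not change the outcome. -/
lemma replace_one (hfnp : FalseNameProofOn D f) (hpart : ParticipationOn D f)
    (g : ℕ → Pref A) (N : Finset ℕ) (hN : N.Nonempty) {i j : ℕ}
    (hi : i ∈ N) (hj : j ∉ N) (hg : g j = g i) (hD : ∀ k ∈ N, g k ∈ D) :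
    f N (fun k _ => g k) = f (insert j (N.erase i)) (fun k _ => g k) := by
  have hU : N ∪ ({j} : Finset ℕ) = insert j N := by
    rw [Finset.union_comm, ← Finset.insert_eq]
  have hDU : Profile.inDomain (N := N ∪ ({j} : Finset ℕ)) (fun k _ => g k) D := by
    intro k hk
    rcases Finset.mem_union.mp hk with h | h
    · exact hD k h
    · simp only [Finset.mem_singleton] at h; subst h; simpa [hg] using hD i hi
  have hcard : 2 ≤ (N ∪ ({j} : Finset ℕ)).card := by
    rw [hU, Finset.card_insert_of_notMem hj]
    have := Finset.card_pos.mpr hN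
    omega
  have hdisj : Disjoint N ({j} : Finset ℕ) := Finset.disjoint_singleton_right.mpr hj
  -- Step 1: f (N ∪ {j}) = f N
  have fnp1 := hfnp N {j} hN ⟨j, Finset.mem_singleton_self j⟩ hdisj
      (fun k _ => g k) hDU i hi
      (fun k hk => by simp only [Finset.mem_singleton] at hk; subst hk; exact hg)
  have part1 := hpart (N ∪ {j}) hcard (fun k _ => g k) hDU j
      (Finset.mem_union_right N (Finset.mem_singleton_self j))
  have e1 : (N ∪ ({j} : Finset ℕ)).erase j = N := by
    rw [hU, Finset.erase_insert hj]
  rw [e1, hg] at part1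
  have step1 : f (N ∪ ({j} : Finset ℕ)) (fun k _ => g k) = f N (fun k _ => g k) :=
    (g i).le_antisymm _ _ fnp1 part1
  -- Step 2: f (N ∪ {j}) = f M where M = insert j (N.erase i)
  set M : Finset ℕ := insert j (N.erase i) with hM
  have hij : i ≠ j := fun h => hj (h ▸ hi)
  have hiM : i ∉ M := by
    simp [hM, Finset.mem_insert, Finset.mem_erase, hij]
  have hMU : M ∪ ({i} : Finset ℕ) = N ∪ {j} := by
    ext k
    simp only [hM, Finset.mem_union, Finset.mem_insert, Finset.mem_erase,
      Finset.mem_singleton]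
    constructor
    · rintro ((rfl | ⟨_, hk⟩) | rfl) <;> tauto
    · rintro (hk | rfl)
      · by_cases hki : k = i <;> tauto
      · tauto
  have hDM : Profile.inDomain (N := M ∪ ({i} : Finset ℕ)) (fun k _ => g k) D := by
    intro k hk
    rw [hMU] at hk
    exact hDU k hk
  have hdisjM : Disjoint M ({i} : Finset ℕ) := Finset.disjoint_singleton_right.mpr hiM
  have hjM : j ∈ M := Finset.mem_insert_self j _
  have fnp2 := hfnp M {i} ⟨j, hjM⟩ ⟨i, Finset.mem_singleton_self i⟩ hdisjM
      (fun k _ => g k) hDM j hjM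
      (fun k hk => by simp only [Finset.mem_singleton] at hk; subst hk; exact hg.symm)
  have hfMU : f (M ∪ ({i} : Finset ℕ)) (fun k _ => g k)
      = f (N ∪ ({j} : Finset ℕ)) (fun k _ => g k) := by rw [hMU]
  rw [hfMU] at fnp2
  have part2 := hpart (N ∪ {j}) hcard (fun k _ => g k) hDU i
      (Finset.mem_union_left _ hi)
  have e2 : (N ∪ ({j} : Finset ℕ)).erase i = M := by
    rw [hU, Finset.erase_insert_of_ne hij.symm]
  rw [e2] at part2
  simp only [hg] at fnp2
  have step2 : f (N ∪ ({j} : Finset ℕ)) (fun k _ => g k) = f M (fun k _ => g k) :=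
    (g i).le_antisymm _ _ fnp2 part2
  rw [← step1, step2]

/-- Moving a subset `S` of the society `N` to fresh names via `t`. -/
lemma move_set (hfnp : FalseNameProofOn D f) (hpart : ParticipationOn D f)
    (g : ℕ → Pref A) (N : Finset ℕ) (hN : N.Nonempty) (t : ℕ → ℕ)
    (ht : Function.Injective t) (hdis : ∀ n ∈ N, t n ∉ N)
    (hgt : ∀ n ∈ N, g (t n) = g n) (hD : ∀ n ∈ N, g n ∈ D) :
    ∀ S : Finset ℕ, S ⊆ N →
      f (N \ S ∪ S.image t) (fun k _ => g k) = f N (fun k _ => g k) := by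
  intro S
  induction S using Finset.induction_on with
  | empty =>
    intro _
    rw [show N \ (∅ : Finset ℕ) ∪ (∅ : Finset ℕ).image t = N by simp]
  | @insert a S ha IH =>
    intro hsub
    have haN : a ∈ N := hsub (Finset.mem_insert_self a S)
    have hS : S ⊆ N := fun x hx => hsub (Finset.mem_insert_of_mem hx)
    have IH' := IH hS
    set T : Finset ℕ := N \ S ∪ S.image t with hT
    have haT : a ∈ T := Finset.mem_union_left _ (Finset.mem_sdiff.mpr ⟨haN, ha⟩)
    have htaT : t a ∉ T := by
      intro h
      rcases Finset.mem_union.mp h with h | h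
      · exact hdis a haN (Finset.mem_sdiff.mp h).1
      · obtain ⟨s, hs, hst⟩ := Finset.mem_image.mp h
        exact ha (ht hst ▸ hs)
    have hDT : ∀ k ∈ T, g k ∈ D := by
      intro k hk
      rcases Finset.mem_union.mp hk with h | h
      · exact hD k (Finset.mem_sdiff.mp h).1
      · obtain ⟨s, hs, rfl⟩ := Finset.mem_image.mp h
        rw [hgt s (hS hs)]; exact hD s (hS hs)
    have hrepl := replace_one hfnp hpart g T ⟨a, haT⟩ haT htaT
      (hgt a haN) hDT
    have heq : insert (t a) (T.erase a) = N \ insert a S ∪ (insert a S).image t := by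
      ext k
      simp only [hT, Finset.mem_insert, Finset.mem_erase, Finset.mem_union,
        Finset.mem_sdiff, Finset.mem_image]
      constructor
      · rintro (rfl | ⟨hka, (⟨h1, h2⟩ | ⟨s, hs, rfl⟩)⟩)
        · exact Or.inr ⟨a, Or.inl rfl, rfl⟩
        · exact Or.inl ⟨h1, by simp [hka, h2]⟩
        · exact Or.inr ⟨s, Or.inr hs, rfl⟩
      · rintro (⟨h1, h2⟩ | ⟨s, hs, rfl⟩)
        · simp only [Finset.mem_insert, not_or] at h2
          exact Or.inr ⟨h2.1, Or.inl ⟨h1, h2.2⟩⟩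
        · rcases hs with rfl | hs
          · exact Or.inl rfl
          · refine Or.inr ⟨?_, Or.inr ⟨s, hs, rfl⟩⟩
            intro h
            exact hdis s (hS hs) (h ▸ haN)
    rw [heq] at hrepl
    rw [← hrepl, IH']

end Aux

/-- Every voting rule on a domain `D` satisfying false-name-proofness
and participation is anonymous. -/
theorem stmt_2 {A : Type*} (D : Set (Pref A)) (f : Rule A)
    (hfnp : FalseNameProofOn D f) (hpart : ParticipationOn D f) :
    AnonymousOn D f := by
  intro σ N hN P hPD
  classical
  obtain ⟨n₀, hn₀⟩ := hN
  set p₀ : Pref A := P n₀ hn₀ with hp₀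
  set W : Finset ℕ := N ∪ N.image σ with hW
  set c : ℕ := W.sup id + 1 with hc
  have hlt : ∀ k ∈ W, k < c := by
    intro k hk
    have := Finset.le_sup (f := id) hk
    simpa [hc] using Nat.lt_succ_of_le this
  have hltN : ∀ k ∈ N, k < c := fun k hk => hlt k (Finset.mem_union_left _ hk)
  have hltN' : ∀ k ∈ N.image σ, k < c := fun k hk => hlt k (Finset.mem_union_right _ hk)
  -- total preference functions
  set g₁ : ℕ → Pref A := fun k =>
    if h : k ∈ N then P k h else if h : k - c ∈ N ∧ c ≤ k then P (k - c) h.1 else p₀ with hg₁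
  set g₂ : ℕ → Pref A := fun k =>
    if h : k ∈ N.image σ then P (σ.symm k) (mem_of_mem_image_perm h)
    else if h : k - c ∈ N ∧ c ≤ k then P (k - c) h.1 else p₀ with hg₂
  set F : Finset ℕ := N.image (fun n => n + c) with hF
  have Pcongr : ∀ m n (_ : m = n) (hm : m ∈ N) (hn : n ∈ N), P m hm = P n hn := by
    rintro m n rfl hm hn; rfl
  -- values of g₁
  have hg₁N : ∀ k (hk : k ∈ N), g₁ k = P k hk := by
    intro k hk; simp only [hg₁]; rw [dif_pos hk]
  have hg₁F : ∀ n (hn : n ∈ N), g₁ (n + c) = P n hn := by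
    intro n hn
    have h1 : n + c ∉ N := fun h => absurd (hltN _ h) (by omega)
    simp only [hg₁]
    rw [dif_neg h1, dif_pos ⟨by rw [Nat.add_sub_cancel]; exact hn, by omega⟩]
    exact Pcongr _ _ (by omega) _ hn
  -- values of g₂
  have hg₂N : ∀ k (hk : k ∈ N.image σ), g₂ k = P (σ.symm k) (mem_of_mem_image_perm hk) := by
    intro k hk; simp only [hg₂]; rw [dif_pos hk]
  have hg₂F : ∀ n (hn : n ∈ N), g₂ (n + c) = P n hn := by
    intro n hn
    have h1 : n + c ∉ N.image σ := fun h => absurd (hltN' _ h) (by omega)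
    simp only [hg₂]
    rw [dif_neg h1, dif_pos ⟨by rw [Nat.add_sub_cancel]; exact hn, by omega⟩]
    exact Pcongr _ _ (by omega) _ hn
  -- first move: N to F
  have move1 := move_set hfnp hpart g₁ N ⟨n₀, hn₀⟩ (fun n => n + c)
    (fun a b h => by have h' : a + c = b + c := h; omega)
    (fun n hn h => by have h' : n + c < c := hltN _ h; omega)
    (fun n hn => (hg₁F n hn).trans (hg₁N n hn).symm)
    (fun n hn => (hg₁N n hn) ▸ hPD n hn)
    N (le_refl N)
  have hNempty : N \ N ∪ N.image (fun n => n + c) = F := by simp [hF]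
  rw [hNempty] at move1
  -- second move: N.image σ to F
  have hN' : (N.image σ).Nonempty := ⟨σ n₀, Finset.mem_image_of_mem σ hn₀⟩
  set t' : ℕ → ℕ := fun k => σ.symm k + c with ht'
  have himg : (N.image σ).image t' = F := by
    rw [Finset.image_image, hF]
    congr 1
    ext n
    simp [ht']
  have move2 := move_set hfnp hpart g₂ (N.image σ) hN' t'
    (fun a b h => by
      simp only [ht'] at h
      have : σ.symm a = σ.symm b := by omega
      exact σ.symm.injective this)
    (fun n hn h => absurd (hltN' _ h) (by simp only [ht']; omega))
    (fun n hn => by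
      have hsn : σ.symm n ∈ N := mem_of_mem_image_perm hn
      have := hg₂F (σ.symm n) hsn
      rw [hg₂N n hn]
      simpa [ht'] using this)
    (fun n hn => (hg₂N n hn) ▸ hPD (σ.symm n) (mem_of_mem_image_perm hn))
    (N.image σ) (le_refl _)
  have hNempty' : (N.image σ) \ (N.image σ) ∪ (N.image σ).image t' = F := by
    simp [himg]
  rw [hNempty'] at move2
  -- identify profiles
  have eq1 : f N (fun k (hk : k ∈ N) => g₁ k) = f N P := by
    congr 1
    funext k hk
    exact hg₁N k hk
  have eq2 : f (N.image σ) (fun k (hk : k ∈ N.image σ) => g₂ k)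
      = f (N.image σ) (permProfile σ P) := by
    congr 1
    funext k hk
    exact hg₂N k hk
  have eqF : f F (fun k (hk : k ∈ F) => g₁ k) = f F (fun k (hk : k ∈ F) => g₂ k) := by
    congr 1
    funext k hk
    obtain ⟨n, hn, rfl⟩ := Finset.mem_image.mp hk
    rw [hg₁F n hn, hg₂F n hn]
  rw [← eq2, ← move2, ← eqF, move1]
  exact eq1
end

section
/- Let A be a finite set of alternatives with |A| ≥ 2. There is no voting rule f on the universal domain 𝒰_A that satisfies both anonymity and neutrality. -/
/-! ### Auxiliary lemmas for the proof of `stmt_3` -/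

lemma Pref.relabel_relabel {A : Type*} (p : Pref A) (γ₁ γ₂ : Equiv.Perm A) :
    (p.relabel γ₁).relabel γ₂ = p.relabel (γ₂ * γ₁) := by
  apply LinearOrder.ext
  intro x y
  rfl

lemma rule_congr_s3 {A : Type*} (f : Rule A) {M N : Finset ℕ} (h : M = N)
    (Q : Profile A M) (Q' : Profile A N)
    (hq : ∀ i (hi : i ∈ M) (hi' : i ∈ N), Q i hi = Q' i hi') : f M Q = f N Q' := by
  subst h
  have : Q = Q' := by funext i hi; exact hq i hi hi
  rw [this]

open Fin.NatCast in
lemma finRotate_pow_apply (m k : ℕ) (i : Fin (m + 1)) :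
    ((finRotate (m + 1)) ^ k) i = i + (k : Fin (m + 1)) := by
  induction k with
  | zero => simp
  | succ k ih =>
    rw [pow_succ', Equiv.Perm.mul_apply, ih, finRotate_succ_apply]
    push_cast
    rw [add_assoc]

lemma pow_mod_of_pow_eq_one {G : Type*} [Group G] {g : G} {n : ℕ} (h : g ^ n = 1) (k : ℕ) :
    g ^ (k % n) = g ^ k := by
  conv_rhs => rw [← Nat.div_add_mod k n]
  rw [pow_add, pow_mul, h, one_pow, one_mul]

/-- For a finite set of alternatives with at least two elements, no
voting rule on the universal domain is both anonymous and neutral. -/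
theorem stmt_3 {A : Type*} [Fintype A] (hA : 2 ≤ Fintype.card A) :
    ¬ ∃ f : Rule A, AnonymousOn Set.univ f ∧ NeutralOn Set.univ f := by
  rintro ⟨f, hAnon, hNeut⟩
  obtain ⟨m, hm⟩ : ∃ m, Fintype.card A = m + 1 := ⟨Fintype.card A - 1, by omega⟩
  have hm1 : 1 ≤ m := by omega
  have e : A ≃ Fin (m + 1) := (Fintype.equivFin A).trans (finCongr hm)
  set rot : Equiv.Perm (Fin (m + 1)) := finRotate (m + 1) with hrot
  set γ : Equiv.Perm A := (e.trans rot).trans e.symm with hγ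
  have hpow : ∀ (k : ℕ) (a : A), (γ ^ k) a = e.symm ((rot ^ k) (e a)) := by
    intro k
    induction k with
    | zero => intro a; simp
    | succ k ih =>
      intro a
      rw [pow_succ, Equiv.Perm.mul_apply, ih, pow_succ, Equiv.Perm.mul_apply]
      simp [hγ]
  have hγn : γ ^ (m + 1) = 1 := by
    ext a
    rw [hpow, hrot, finRotate_pow_apply]
    simp
  have hnofix : ∀ a : A, γ a ≠ a := by
    intro a h
    have h1 : rot (e a) = e a := by
      have := congrArg e h
      simpa [hγ] using this
    rw [hrot, finRotate_succ_apply] at h1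
    have h2 : (1 : Fin (m + 1)) = 0 := by
      have := add_left_cancel (a := e a) (b := 1) (c := 0) (by rw [add_zero]; exact h1)
      exact this
    rw [Fin.one_eq_zero_iff] at h2
    omega
  -- the society and profile
  set N : Finset ℕ := Finset.range (m + 1) with hN
  have hNne : N.Nonempty := Finset.nonempty_range_iff.mpr (by omega)
  set p0 : Pref A := LinearOrder.lift' (fun a => e a) e.injective with hp0
  set P : Profile A N := fun i _ => p0.relabel (γ ^ i) with hP
  have hPdom : P.inDomain Set.univ := fun _ _ => Set.mem_univ _
  -- the voter permutation
  set τ : Equiv.Perm ℕ := (finRotate (m + 1)).extendDomain Fin.equivSubtype with hτ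
  set σ : Equiv.Perm ℕ := τ.symm with hσ
  have hτlt : ∀ j : ℕ, j < m + 1 → τ j = (j + 1) % (m + 1) := by
    intro j hj
    have h1 : τ j = ((Fin.equivSubtype ((finRotate (m + 1)) (Fin.equivSubtype.symm ⟨j, hj⟩))) : ℕ) :=
      Equiv.Perm.extendDomain_apply_subtype _ Fin.equivSubtype hj
    rw [h1, finRotate_succ_apply]
    simp [Fin.equivSubtype, Fin.add_def]
  -- σ maps N onto N
  have hτN : N.image τ = N := by
    apply Finset.eq_of_subset_of_card_le
    · intro j hj
      obtain ⟨i, hi, rfl⟩ := Finset.mem_image.mp hj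
      rw [hN, Finset.mem_range] at hi ⊢
      rw [hτlt i hi]
      exact Nat.mod_lt _ (by omega)
    · rw [Finset.card_image_of_injective _ τ.injective]
  have himg : N.image σ = N := by
    conv_lhs => rw [← hτN]
    rw [Finset.image_image]
    have : (⇑σ ∘ ⇑τ) = id := by
      funext x
      simp [hσ]
    rw [this, Finset.image_id]
  -- put it together
  have h1 : γ (f N P) = f N (fun i hi => (P i hi).relabel γ) := hNeut γ N hNne P hPdom
  have h2 : f (N.image σ) (permProfile σ P) = f N P := hAnon σ N hNne P hPdom
  have h3 : f (N.image σ) (permProfile σ P) = f N (fun i hi => (P i hi).relabel γ) := by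
    apply rule_congr_s3 f himg
    intro i hi hi'
    have hilt : i < m + 1 := by rwa [hN, Finset.mem_range] at hi'
    have hσsymm : σ.symm i = (i + 1) % (m + 1) := by
      rw [hσ, Equiv.symm_symm, hτlt i hilt]
    show P (σ.symm i) (mem_of_mem_image_perm hi) = (P i hi').relabel γ
    rw [hP]
    simp only
    rw [Pref.relabel_relabel, ← pow_succ']
    congr 1
    calc γ ^ σ.symm i = γ ^ ((i + 1) % (m + 1)) := by rw [hσsymm]
    _ = γ ^ (i + 1) := pow_mod_of_pow_eq_one hγn _
  rw [h3, ← h1] at h2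
  exact hnofix _ h2
end

section
/- There is no voting rule f on the universal domain 𝒰_𝒪 over subsets of objects that satisfies ontoness, tops-onliness, false-name-proofness, participation, and object neutrality. -/
/-! ## The domain of preferences over subsets of a set `O` of objects -/

/-- Object neutrality: permuting the objects by `μ` (which permutes every subset of
objects pointwise) relabels the outcome accordingly. -/
def ObjectNeutralOn {O : Type*} [Fintype O] [DecidableEq O]
    (D : Set (Pref (Finset O))) (f : Rule (Finset O)) : Prop :=
  ∀ (μ : Equiv.Perm O) (N : Finset ℕ), N.Nonempty →
    ∀ P : Profile (Finset O) N, P.inDomain D →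
      (f N P).image μ = f N (fun i hi => (P i hi).relabel μ.finsetCongr)

/-- A preference over subsets of objects is separable if adding an object `x ∉ S` to a
set `S` improves the set exactly when `{x}` is preferred to `∅`. -/
def Separable {O : Type*} [Fintype O] [DecidableEq O] (p : Pref (Finset O)) : Prop :=
  ∀ (S : Finset O) (x : O), x ∉ S → (p.pref (insert x S) S ↔ p.pref {x} (∅ : Finset O))

/-- The domain of separable preferences over subsets of objects. -/
def SepDom (O : Type*) [Fintype O] [DecidableEq O] : Set (Pref (Finset O)) :=
  {p | Separable p}

/-- `t(P_N)`: the set of distinct top sets of the profile `P`. -/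
noncomputable def distinctTops {O : Type*} [Fintype O] [DecidableEq O] {N : Finset ℕ}
    (P : Profile (Finset O) N) : Finset (Finset O) :=
  N.attach.image fun i => (P i.1 i.2).top

/-- The rule `f^>`: an object is chosen iff it belongs to strictly more than half of the
distinct top sets of the profile. -/
noncomputable def fGt (O : Type*) [Fintype O] [DecidableEq O] : Rule (Finset O) :=
  fun N P =>
    Finset.univ.filter fun x =>
      (distinctTops P).card < 2 * ((distinctTops P).filter fun T => x ∈ T).card

/-- The rule `f^≥`: an object is chosen iff it belongs to at least half of the
distinct top sets of the profile. -/
noncomputable def fGe (O : Type*) [Fintype O] [DecidableEq O] : Rule (Finset O) :=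
  fun N P =>
    Finset.univ.filter fun x =>
      (distinctTops P).card ≤ 2 * ((distinctTops P).filter fun T => x ∈ T).card

/-- `g` is the tops-only extension to the domain `Dbig` (⊇ separable preferences) of the
tops-only rule `f` defined on the separable domain: on every `Dbig`-profile `P`, `g`
agrees with the value of `f` at any separable profile `Q` having the same tops as `P`. -/
def IsTopsOnlyExtensionOn {O : Type*} [Fintype O] [DecidableEq O]
    (Dbig : Set (Pref (Finset O))) (f g : Rule (Finset O)) : Prop :=
  ∀ N : Finset ℕ, N.Nonempty →
    ∀ P : Profile (Finset O) N, P.inDomain Dbig →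
      ∀ Q : Profile (Finset O) N, Q.inDomain (SepDom O) →
        (∀ i (hi : i ∈ N), (P i hi).top = (Q i hi).top) → g N P = f N Q

/-! ### Auxiliary infrastructure for the proof of Statement 5 -/

section Stmt5Aux
variable {A : Type*} [Fintype A] [DecidableEq A] [Nonempty A]

set_option linter.unusedSectionVars false

noncomputable def rankPref (r : A → ℕ) (hr : Function.Injective r) : Pref A :=
  LinearOrder.lift' r hr

lemma rankPref_le (r : A → ℕ) (hr) {x y : A} : (rankPref r hr).le x y ↔ r x ≤ r y := Iff.rfl

lemma pref_le_top (p : Pref A) (x : A) : p.le x p.top :=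
  @Finset.le_max' A p _ x (Finset.mem_univ x)

lemma pref_le_antisymm (p : Pref A) {x y : A} (h1 : p.le x y) (h2 : p.le y x) : x = y :=
  @le_antisymm A (@LinearOrder.toPartialOrder A p) _ _ h1 h2

lemma pref_top_unique (p : Pref A) {T : A} (h : ∀ x, p.le x T) : p.top = T :=
  pref_le_antisymm p (@Finset.max'_le A p _ _ T (fun y _ => h y)) (pref_le_top p T)

lemma relabel_le (p : Pref A) (γ : Equiv.Perm A) {x y : A} :
    (p.relabel γ).le x y ↔ p.le (γ.symm x) (γ.symm y) := Iff.rfl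

lemma relabel_top (p : Pref A) (γ : Equiv.Perm A) : (p.relabel γ).top = γ p.top := by
  apply pref_top_unique
  intro x
  rw [relabel_le]
  simp only [Equiv.symm_apply_apply]
  exact pref_le_top p _

noncomputable def baseRank (T : A) : A → ℕ :=
  fun x => if x = T then Fintype.card A else (Fintype.equivFin A x : ℕ)

lemma baseRank_lt (T : A) {x : A} (hx : x ≠ T) : baseRank T x < Fintype.card A := by
  simp only [baseRank, if_neg hx]
  exact (Fintype.equivFin A x).2

lemma baseRank_inj (T : A) : Function.Injective (baseRank T) := by
  intro x y hxy
  by_cases hx : x = T <;> by_cases hy : y = T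
  · rw [hx, hy]
  · exfalso; rw [baseRank, if_pos hx] at hxy; exact absurd (hxy ▸ baseRank_lt T hy) (lt_irrefl _)
  · exfalso; rw [baseRank, baseRank, if_neg hx, if_pos hy] at hxy
    exact absurd (hxy ▸ (Fintype.equivFin A x).2) (lt_irrefl _)
  · rw [baseRank, baseRank, if_neg hx, if_neg hy] at hxy
    exact (Fintype.equivFin A).injective (Fin.ext hxy)

noncomputable def basePref (T : A) : Pref A := rankPref (baseRank T) (baseRank_inj T)

lemma basePref_top (T : A) : (basePref T).top = T := by
  apply pref_top_unique
  intro x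
  rw [basePref, rankPref_le]
  by_cases hx : x = T
  · rw [hx]
  · refine le_of_lt ?_
    calc baseRank T x < Fintype.card A := baseRank_lt T hx
    _ = baseRank T T := by rw [baseRank, if_pos rfl]

noncomputable def pairRank (T v : A) : A → ℕ :=
  fun x => if x = T then Fintype.card A + 1 else if x = v then Fintype.card A else
    (Fintype.equivFin A x : ℕ)

lemma pairRank_lt (T v : A) {x : A} (hx : x ≠ T) (hv : x ≠ v) :
    pairRank T v x < Fintype.card A := by
  simp only [pairRank, if_neg hx, if_neg hv]
  exact (Fintype.equivFin A x).2

lemma pairRank_inj (T v : A) (hTv : v ≠ T) : Function.Injective (pairRank T v) := by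
  intro x y hxy
  have ex := (Fintype.equivFin A x).2
  have ey := (Fintype.equivFin A y).2
  unfold pairRank at hxy
  split_ifs at hxy with h1 h2 h3 h4 h5 h6 h7 <;>
    first
      | (subst_vars; rfl)
      | omega
      | (exact (Fintype.equivFin A).injective (Fin.ext hxy))

noncomputable def pairPref (T v : A) (h : v ≠ T) : Pref A :=
  rankPref (pairRank T v) (pairRank_inj T v h)

lemma pairPref_top (T v : A) (h : v ≠ T) : (pairPref T v h).top = T := by
  apply pref_top_unique
  intro x
  rw [pairPref, rankPref_le]
  have hT : pairRank T v T = Fintype.card A + 1 := by rw [pairRank, if_pos rfl]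
  rw [hT]
  by_cases hx : x = T
  · rw [hx, hT]
  · by_cases hxv : x = v
    · rw [pairRank, if_neg hx, if_pos hxv]; omega
    · have := pairRank_lt T v hx hxv; omega

/-- The key "pinning" lemma: if `u` is weakly preferred to `v` under every preference
with top `T`, then `u = v` or `u = T`. -/
lemma pin {T u v : A} (h : ∀ p : Pref A, p.top = T → p.wpref u v) : u = v ∨ u = T := by
  by_cases huT : u = T
  · exact Or.inr huT
  left
  by_contra huv
  by_cases hvT : v = T
  · have h1 := h (basePref T) (basePref_top T)
    rw [Pref.wpref] at h1
    have h2 := pref_le_top (basePref T) u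
    rw [basePref_top] at h2
    exact huT (pref_le_antisymm _ h2 (hvT ▸ h1))
  · have h1 := h (pairPref T v hvT) (pairPref_top T v hvT)
    rw [Pref.wpref, pairPref, rankPref_le] at h1
    have hvv : pairRank T v v = Fintype.card A := by rw [pairRank, if_neg hvT, if_pos rfl]
    have := pairRank_lt T v huT (fun he => huv he)
    omega

lemma univ_inDomain {N : Finset ℕ} (P : Profile A N) : P.inDomain Set.univ :=
  fun _ _ => Set.mem_univ _

/-- The canonical profile with prescribed tops `t`. -/
noncomputable def canonP (t : ℕ → A) (N : Finset ℕ) : Profile A N :=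
  fun i _ => basePref (t i)

/-- The value of the rule `f` on the canonical profile with tops `t`. -/
noncomputable def vval (f : Rule A) (N : Finset ℕ) (t : ℕ → A) : A := f N (canonP t N)

lemma vval_congr (f : Rule A) (N : Finset ℕ) {t t' : ℕ → A}
    (h : ∀ i ∈ N, t i = t' i) : vval f N t = vval f N t' := by
  unfold vval canonP
  congr 1
  funext i hi
  rw [h i hi]

/-- `α` at position `k`, `β` elsewhere. -/
def tp (α β : A) (k : ℕ) : ℕ → A := fun i => if i = k then α else β

end Stmt5Aux

/-- On the universal domain of preferences over subsets of a set of at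
least two objects, no voting rule satisfies ontoness, tops-onliness,
false-name-proofness, participation and object neutrality. -/
theorem stmt_5 {O : Type*} [Fintype O] [DecidableEq O] (hO : 2 ≤ Fintype.card O) :
    ¬ ∃ f : Rule (Finset O),
        OntoOn Set.univ f ∧ TopsOnlyOn Set.univ f ∧ FalseNameProofOn Set.univ f ∧
        ParticipationOn Set.univ f ∧ ObjectNeutralOn Set.univ f := by
  haveI : Nonempty (Finset O) := ⟨∅⟩
  rintro ⟨f, onto, tops, fnp, part, neut⟩
  classical
  -- tops-onliness in canonical form
  have hto : ∀ (N : Finset ℕ) (hN : N.Nonempty) (P : Profile (Finset O) N) (t : ℕ → Finset O),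
      (∀ i (hi : i ∈ N), (P i hi).top = t i) → f N P = vval f N t := by
    intro N hN P t ht
    exact tops N hN P (canonP t N) (univ_inDomain P) (univ_inDomain _)
      (fun i hi => by rw [ht i hi]; exact (basePref_top _).symm)
  -- participation in pinned form
  have hpart : ∀ (N : Finset ℕ) (t : ℕ → Finset O) (i : ℕ), 2 ≤ N.card → i ∈ N →
      vval f N t = vval f (N.erase i) t ∨ vval f N t = t i := by
    intro N t i h2 hi
    have hNne : N.Nonempty := Finset.card_pos.mp (by omega)
    have hEne : (N.erase i).Nonempty := by
      rw [← Finset.card_pos, Finset.card_erase_of_mem hi]; omega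
    apply pin
    intro p hp
    set P : Profile (Finset O) N := fun j _ => if j = i then p else basePref (t j) with hP
    have h1 : f N P = vval f N t := by
      apply hto N hNne P t
      intro j hj
      by_cases hji : j = i
      · subst hji; rw [hP]; simp only [if_pos rfl]; exact hp
      · rw [hP]; simp only [if_neg hji]; exact basePref_top _
    have h2' : f (N.erase i) (fun j hj => P j (Finset.mem_of_mem_erase hj))
        = vval f (N.erase i) t := by
      apply hto _ hEne
      intro j hj
      have hji : j ≠ i := Finset.ne_of_mem_erase hj
      rw [hP]; simp only [if_neg hji]; exact basePref_top _
    have hpa := part N h2 P (univ_inDomain P) i hi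
    rw [h1, h2'] at hpa
    have hPi : P i hi = p := by rw [hP]; simp
    rwa [hPi] at hpa
  -- false-name-proofness in pinned form
  have hfnp : ∀ (N N' : Finset ℕ) (t : ℕ → Finset O) (i : ℕ), N.Nonempty → N'.Nonempty →
      Disjoint N N' → i ∈ N → (∀ j ∈ N', t j = t i) →
      vval f N t = vval f (N ∪ N') t ∨ vval f N t = t i := by
    intro N N' t i hN hN' hdis hi htN'
    apply pin
    intro p hp
    set P : Profile (Finset O) (N ∪ N') :=
      fun j _ => if j = i ∨ j ∈ N' then p else basePref (t j) with hP
    have hfn := fnp N N' hN hN' hdis P (univ_inDomain P) i hi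
      (fun j hj => by
        rw [hP]; simp [hj])
    have h1 : f N (fun j hj => P j (Finset.mem_union_left N' hj)) = vval f N t := by
      apply hto N hN
      intro j hj
      by_cases hji : j = i
      · subst hji; rw [hP]; simp only [if_pos (Or.inl rfl)]; exact hp
      · have hjN' : j ∉ N' := fun hc => Finset.disjoint_left.mp hdis hj hc
        rw [hP]; simp only [if_neg (not_or.mpr ⟨hji, hjN'⟩)]; exact basePref_top _
    have h2 : f (N ∪ N') P = vval f (N ∪ N') t := by
      apply hto _ ⟨i, Finset.mem_union_left N' hi⟩
      intro j hj
      by_cases hc : j = i ∨ j ∈ N'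
      · rw [hP]; simp only [if_pos hc]
        rcases hc with hc | hc
        · rw [hc]; exact hp
        · rw [htN' j hc]; exact hp
      · rw [hP]; simp only [if_neg hc]; exact basePref_top _
    rw [h1, h2] at hfn
    have hPi : P i (Finset.mem_union_left N' hi) = p := by
      rw [hP]; simp
    rwa [hPi] at hfn
  -- object neutrality in canonical form
  have hneut : ∀ (μ : Equiv.Perm O) (N : Finset ℕ), N.Nonempty → ∀ t : ℕ → Finset O,
      vval f N (fun i => (t i).image μ) = (vval f N t).image μ := by
    intro μ N hN t
    have hne := neut μ N hN (canonP t N) (univ_inDomain _)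
    rw [show f N (fun i hi => ((canonP t N) i hi).relabel μ.finsetCongr)
        = vval f N (fun i => (t i).image μ) from ?_] at hne
    · exact hne.symm
    · apply hto N hN
      intro i hi
      rw [relabel_top]
      show μ.finsetCongr ((basePref (t i)).top) = (t i).image μ
      rw [basePref_top, Equiv.finsetCongr_apply, Finset.map_eq_image]
      rfl
  -- injectivity of the one-voter rule
  have hinj : Function.Injective (fun T : Finset O => vval f {1} (fun _ => T)) := by
    rw [Finite.injective_iff_surjective]
    intro a
    obtain ⟨P, _, hPa⟩ := onto {1} ⟨1, by decide⟩ a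
    refine ⟨(P 1 (by decide)).top, ?_⟩
    have h1 := hto {1} ⟨1, by decide⟩ P (fun _ => (P 1 (by decide)).top)
      (fun i hi => by
        have : i = 1 := Finset.mem_singleton.mp hi
        subst this
        rfl)
    show vval f {1} (fun _ => (P 1 (by decide)).top) = a
    exact h1.symm.trans hPa
    -- ### The concrete derivation
  obtain ⟨a, b, hab⟩ := Fintype.exists_pair_of_one_lt_card hO
  set μ : Equiv.Perm O := Equiv.swap a b with hμ
  set α : Finset O := {a} with hαd
  set β : Finset O := {b} with hβd
  have hαβ : α ≠ β := by simp [hαd, hβd, hab]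
  have himgα : α.image μ = β := by rw [hαd, hβd, hμ]; simp
  have himgβ : β.image μ = α := by rw [hαd, hβd, hμ]; simp
  have hinv : ∀ s : Finset O, (s.image μ).image μ = s := by
    intro s
    rw [Finset.image_image]
    have hcomp : (μ : O → O) ∘ μ = id := by
      funext x; simp [hμ, Equiv.swap_apply_self]
    rw [hcomp, Finset.image_id]
  -- relation between the one-voter values at α and β
  have hμ1 : vval f {1} (fun _ => β) = (vval f {1} (fun _ => α)).image μ := by
    have e1 : vval f {1} (fun i => ((fun _ : ℕ => α) i).image μ) = vval f {1} (fun _ => β) :=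
      vval_congr f {1} (fun i _ => himgα)
    rw [← e1]
    exact hneut μ {1} ⟨1, by decide⟩ (fun _ => α)
  -- one-voter societies {1} and {2} give the same value at β
  have hs1 := hfnp {1} {2} (fun _ => β) 1 ⟨1, by decide⟩ ⟨2, by decide⟩ (by decide) (by decide)
    (fun _ _ => rfl)
  rw [show ({1} ∪ {2} : Finset ℕ) = {1, 2} from by decide] at hs1
  have hs2 := hfnp {2} {1} (fun _ => β) 2 ⟨2, by decide⟩ ⟨1, by decide⟩ (by decide) (by decide)
    (fun _ _ => rfl)
  rw [show ({2} ∪ {1} : Finset ℕ) = {1, 2} from by decide] at hs2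
  have hq1 := hpart {1, 2} (fun _ => β) 1 (by decide) (by decide)
  rw [show ({1, 2} : Finset ℕ).erase 1 = {2} from by decide] at hq1
  have hq2 := hpart {1, 2} (fun _ => β) 2 (by decide) (by decide)
  rw [show ({1, 2} : Finset ℕ).erase 2 = {1} from by decide] at hq2
  have hsame : vval f {2} (fun _ => β) = vval f {1} (fun _ => β) := by
    rcases hs1 with h1 | h1
    · rcases hq1 with h3 | h3
      · exact h3.symm.trans h1.symm
      · rcases hs2 with h2 | h2
        · exact h2.trans h1.symm
        · exact (h2.trans h3.symm).trans h1.symm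
    · rcases hs2 with h2 | h2
      · rcases hq2 with h4 | h4
        · exact h2.trans h4
        · exact (h2.trans h4).trans h1.symm
      · exact h2.trans h1.symm
  -- constraints on the two-voter value F at tops (α, β)
  have c1 := hpart {1, 2} (tp α β 1) 2 (by decide) (by decide)
  rw [show ({1, 2} : Finset ℕ).erase 2 = {1} from by decide] at c1
  have c1' : vval f {1, 2} (tp α β 1) = vval f {1} (fun _ => α) ∨
      vval f {1, 2} (tp α β 1) = β := by
    rcases c1 with h | h
    · exact Or.inl (h.trans (vval_congr f {1} (t := tp α β 1) (t' := fun _ => α)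
        (by intro i hi; fin_cases hi <;> norm_num [tp])))
    · exact Or.inr (h.trans (by norm_num [tp]))
  have c2 := hpart {1, 2} (tp α β 1) 1 (by decide) (by decide)
  rw [show ({1, 2} : Finset ℕ).erase 1 = {2} from by decide] at c2
  have c2' : vval f {1, 2} (tp α β 1) = vval f {1} (fun _ => β) ∨
      vval f {1, 2} (tp α β 1) = α := by
    rcases c2 with h | h
    · exact Or.inl (h.trans ((vval_congr f {2} (t := tp α β 1) (t' := fun _ => β)
        (by intro i hi; fin_cases hi <;> norm_num [tp])).trans hsame))
    · exact Or.inr (h.trans (by norm_num [tp]))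
  -- the one-voter rule is the identity on α and β
  have hα1 : vval f {1} (fun _ => α) = α := by
    rcases c1' with h1 | h1 <;> rcases c2' with h2 | h2
    · exact absurd (hinj (h1.symm.trans h2)) hαβ
    · rw [← h1]; exact h2
    · have hb : vval f {1} (fun _ => β) = β := h2.symm.trans h1
      rw [hμ1] at hb
      have h5 := congrArg (Finset.image μ) hb
      rw [hinv, himgβ] at h5
      exact h5
    · exact absurd (h2.symm.trans h1) hαβ
  have hF : vval f {1, 2} (tp α β 1) = α ∨ vval f {1, 2} (tp α β 1) = β := by
    rcases c1' with h | h
    · exact Or.inl (h.trans hα1)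
    · exact Or.inr h
  rcases hF with hFa | hFb
  · -- ### Case F = α
    have d1 := hfnp {1, 2} {3} (tp α β 1) 2 ⟨1, by decide⟩ ⟨3, by decide⟩ (by decide) (by decide)
      (by intro j hj; fin_cases hj <;> norm_num [tp])
    rw [show ({1, 2} ∪ {3} : Finset ℕ) = {1, 2, 3} from by decide] at d1
    have hG : vval f {1, 2, 3} (tp α β 1) = α := by
      rcases d1 with h | h
      · exact h.symm.trans hFa
      · exact absurd (hFa.symm.trans (h.trans (by norm_num [tp]))) hαβ
    have d2 := hpart {1, 2, 3} (tp α β 1) 2 (by decide) (by decide)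
    rw [show ({1, 2, 3} : Finset ℕ).erase 2 = {1, 3} from by decide] at d2
    have hF13 : vval f {1, 3} (tp α β 1) = α := by
      rcases d2 with h | h
      · exact h.symm.trans hG
      · exact absurd ((hG.symm.trans h).trans (by norm_num [tp])) hαβ
    have hFba : vval f {1, 2} (tp β α 1) = β := by
      have h := hneut μ {1, 2} ⟨1, by decide⟩ (tp α β 1)
      rw [hFa, himgα] at h
      refine (vval_congr f {1, 2} (t := tp β α 1)
        (t' := fun i => (tp α β 1 i).image μ) ?_).trans h
      intro i hi; fin_cases hi <;> norm_num [tp, himgα, himgβ]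
    have d3 := hpart {1, 2, 3} (tp α β 2) 3 (by decide) (by decide)
    rw [show ({1, 2, 3} : Finset ℕ).erase 3 = {1, 2} from by decide] at d3
    have hG' : vval f {1, 2, 3} (tp α β 2) = β := by
      rcases d3 with h | h
      · exact h.trans ((vval_congr f {1, 2} (t := tp α β 2) (t' := tp β α 1)
          (by intro i hi; fin_cases hi <;> norm_num [tp])).trans hFba)
      · exact h.trans (by norm_num [tp])
    have d4 := hfnp {2, 3} {1} (tp α β 2) 3 ⟨2, by decide⟩ ⟨1, by decide⟩ (by decide) (by decide)
      (by intro j hj; fin_cases hj <;> norm_num [tp])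
    rw [show ({2, 3} ∪ {1} : Finset ℕ) = {1, 2, 3} from by decide] at d4
    have hF23 : vval f {2, 3} (tp α β 2) = β := by
      rcases d4 with h | h
      · exact h.trans hG'
      · exact h.trans (by norm_num [tp])
    have h23eq : vval f {2, 3} (tp β α 3) = β :=
      (vval_congr f {2, 3} (t := tp β α 3) (t' := tp α β 2)
        (by intro i hi; fin_cases hi <;> norm_num [tp])).trans hF23
    have d5 := hfnp {2, 3} {1} (tp β α 3) 2 ⟨2, by decide⟩ ⟨1, by decide⟩ (by decide) (by decide)
      (by intro j hj; fin_cases hj <;> norm_num [tp])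
    rw [show ({2, 3} ∪ {1} : Finset ℕ) = {1, 2, 3} from by decide] at d5
    have hK : vval f {1, 2, 3} (tp β α 3) = β := by
      rcases d5 with h | h
      · exact h.symm.trans h23eq
      · exact absurd (((h23eq.symm.trans h).trans (by norm_num [tp])).symm) hαβ
    have h13eq : vval f {1, 3} (tp β α 3) = α :=
      (vval_congr f {1, 3} (t := tp β α 3) (t' := tp α β 1)
        (by intro i hi; fin_cases hi <;> norm_num [tp])).trans hF13
    have d6 := hpart {1, 2, 3} (tp β α 3) 2 (by decide) (by decide)
    rw [show ({1, 2, 3} : Finset ℕ).erase 2 = {1, 3} from by decide] at d6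
    rcases d6 with h | h
    · exact hαβ (((hK.symm.trans h).trans h13eq).symm)
    · exact hαβ (((hK.symm.trans h).trans (by norm_num [tp])).symm)
  · -- ### Case F = β
    have e0 : vval f {1, 2} (tp β α 2) = β :=
      (vval_congr f {1, 2} (t := tp β α 2) (t' := tp α β 1)
        (by intro i hi; fin_cases hi <;> norm_num [tp])).trans hFb
    have e1 := hfnp {1, 2} {3} (tp β α 2) 1 ⟨1, by decide⟩ ⟨3, by decide⟩ (by decide) (by decide)
      (by intro j hj; fin_cases hj <;> norm_num [tp])
    rw [show ({1, 2} ∪ {3} : Finset ℕ) = {1, 2, 3} from by decide] at e1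
    have hG : vval f {1, 2, 3} (tp β α 2) = β := by
      rcases e1 with h | h
      · exact h.symm.trans e0
      · exact absurd (((e0.symm.trans h).trans (by norm_num [tp])).symm) hαβ
    have e2 := hpart {1, 2, 3} (tp β α 2) 1 (by decide) (by decide)
    rw [show ({1, 2, 3} : Finset ℕ).erase 1 = {2, 3} from by decide] at e2
    have h23b : vval f {2, 3} (tp β α 2) = β := by
      rcases e2 with h | h
      · exact h.symm.trans hG
      · exact absurd (((hG.symm.trans h).trans (by norm_num [tp])).symm) hαβ
    have e3 : vval f {2, 3} (tp α β 2) = α := by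
      have h := hneut μ {2, 3} ⟨2, by decide⟩ (tp α β 2)
      have hc : vval f {2, 3} (tp β α 2) = vval f {2, 3} (fun i => (tp α β 2 i).image μ) :=
        vval_congr f {2, 3} (t := tp β α 2) (t' := fun i => (tp α β 2 i).image μ)
          (by intro i hi; fin_cases hi <;> norm_num [tp, himgα, himgβ])
      have h' := hc.trans h
      have h5 := congrArg (Finset.image μ) (h23b.symm.trans h').symm
      rw [hinv, himgβ] at h5
      exact h5
    have e4 := hpart {1, 2, 3} (tp α β 1) 3 (by decide) (by decide)
    rw [show ({1, 2, 3} : Finset ℕ).erase 3 = {1, 2} from by decide] at e4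
    have hG2 : vval f {1, 2, 3} (tp α β 1) = β := by
      rcases e4 with h | h
      · exact h.trans hFb
      · exact h.trans (by norm_num [tp])
    have e5 := hfnp {1, 3} {2} (tp α β 1) 3 ⟨1, by decide⟩ ⟨2, by decide⟩ (by decide) (by decide)
      (by intro j hj; fin_cases hj <;> norm_num [tp])
    rw [show ({1, 3} ∪ {2} : Finset ℕ) = {1, 2, 3} from by decide] at e5
    have hF13 : vval f {1, 3} (tp α β 1) = β := by
      rcases e5 with h | h
      · exact h.trans hG2
      · exact h.trans (by norm_num [tp])
    have h23c : vval f {2, 3} (tp β α 3) = α :=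
      (vval_congr f {2, 3} (t := tp β α 3) (t' := tp α β 2)
        (by intro i hi; fin_cases hi <;> norm_num [tp])).trans e3
    have e6 := hpart {1, 2, 3} (tp β α 3) 1 (by decide) (by decide)
    rw [show ({1, 2, 3} : Finset ℕ).erase 1 = {2, 3} from by decide] at e6
    have hK : vval f {1, 2, 3} (tp β α 3) = α := by
      rcases e6 with h | h
      · exact h.trans h23c
      · exact h.trans (by norm_num [tp])
    have h13c : vval f {1, 3} (tp β α 3) = β :=
      (vval_congr f {1, 3} (t := tp β α 3) (t' := tp α β 1)
        (by intro i hi; fin_cases hi <;> norm_num [tp])).trans hF13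
    have e7 := hfnp {1, 3} {2} (tp β α 3) 1 ⟨1, by decide⟩ ⟨2, by decide⟩ (by decide) (by decide)
      (by intro j hj; fin_cases hj <;> norm_num [tp])
    rw [show ({1, 3} ∪ {2} : Finset ℕ) = {1, 2, 3} from by decide] at e7
    rcases e7 with h | h
    · exact hαβ (((h13c.symm.trans h).trans hK).symm)
    · exact hαβ (((h13c.symm.trans h).trans (by norm_num [tp])).symm)
end

section
/- Let P̄_0 be a non-separable preference over 2^𝒪 with t(P̄_0) ≠ ∅. Then the tops-only extension of the rule f^> to the domain 𝒮 ∪ {P̄_0} violates participation: there exist a society N with |N| ≥ 2, a voter i ∈ N, and a profile P_N ∈ (𝒮 ∪ {P̄_0})^N such that f(P_{N\{i}}) P_i f(P_N). -/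
/-! ## Auxiliary machinery for the proof of `stmt_8` -/

section AuxStmt8

variable {O : Type*} [Fintype O] [DecidableEq O]

/-- The outcome function underlying `fGt`, as a function of the set of distinct tops. -/
noncomputable def Fgt (𝒯 : Finset (Finset O)) : Finset O :=
  Finset.univ.filter fun x => 𝒯.card < 2 * (𝒯.filter fun T => x ∈ T).card

lemma fGt_eq_Fgt (N : Finset ℕ) (P : Profile (Finset O) N) :
    fGt O N P = Fgt (distinctTops P) := rfl

lemma mem_distinctTops {N : Finset ℕ} (P : Profile (Finset O) N) (x : Finset O) :
    x ∈ distinctTops P ↔ ∃ i, ∃ hi : i ∈ N, (P i hi).top = x := by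
  unfold distinctTops
  simp only [Finset.mem_image, Finset.mem_attach, true_and, Subtype.exists]

/-- every alternative is weakly below the top -/
lemma Pref.le_top' {A : Type*} [Fintype A] [Nonempty A] (p : Pref A) (S : A) :
    p.le S p.top :=
  @Finset.le_max' A p _ _ (Finset.mem_univ S)

lemma Pref.top_eq_of_forall_le {A : Type*} [Fintype A] [Nonempty A] (p : Pref A) {T : A}
    (h : ∀ S, p.le S T) : p.top = T := by
  letI := p
  exact le_antisymm (Finset.max'_le _ _ _ fun S _ => h S) (Finset.le_max' _ _ (Finset.mem_univ T))

lemma Pref.not_pref_top {A : Type*} [Fintype A] [Nonempty A] (p : Pref A) (S : A) :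
    ¬ p.pref S p.top := by
  letI := p
  exact not_lt.mpr (p.le_top' S)

/-! ### A separable preference with a prescribed top -/

/-- the set of objects on which `S` agrees with `T` -/
def agreeSet (T S : Finset O) : Finset O :=
  Finset.univ.filter fun x => (x ∈ S ↔ x ∈ T)

lemma agreeSet_injective (T : Finset O) : Function.Injective (agreeSet T) := by
  intro S S' h
  ext x
  have hx := Finset.ext_iff.mp h x
  simp only [agreeSet, Finset.mem_filter, Finset.mem_univ, true_and] at hx
  tauto

@[simp] lemma agreeSet_self (T : Finset O) : agreeSet T T = Finset.univ := by
  simp [agreeSet]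

noncomputable def oLin (O : Type*) [Fintype O] : LinearOrder O :=
  LinearOrder.lift' (Fintype.equivFin O) (Fintype.equivFin O).injective

noncomputable def colexOrd (O : Type*) [Fintype O] : LinearOrder (Colex (Finset O)) :=
  @Finset.Colex.instLinearOrder O (oLin O)

/-- A separable preference whose top is `T`. -/
noncomputable def sepPref (T : Finset O) : Pref (Finset O) :=
  @LinearOrder.lift' (Finset O) (Colex (Finset O)) (colexOrd O)
    (fun S => toColex (agreeSet T S))
    (fun _ _ h => agreeSet_injective T (toColex_inj.1 h))

lemma sepPref_lt_iff (T S S' : Finset O) :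
    (sepPref T).lt S S' ↔
      @LT.lt _ (colexOrd O).toLT
        (toColex (agreeSet T S)) (toColex (agreeSet T S')) :=
  Iff.rfl

lemma sepPref_le_iff (T S S' : Finset O) :
    (sepPref T).le S S' ↔
      @LE.le _ (colexOrd O).toLE
        (toColex (agreeSet T S)) (toColex (agreeSet T S')) :=
  Iff.rfl

lemma agreeSet_insert_of_mem {T S : Finset O} {x : O} (hxS : x ∉ S) (hxT : x ∈ T) :
    agreeSet T (insert x S) = insert x (agreeSet T S) := by
  ext y
  by_cases hy : y = x
  · subst hy; simp [agreeSet, hxT]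
  · simp [agreeSet, hy, Finset.mem_insert]

lemma agreeSet_insert_of_not_mem {T S : Finset O} {x : O} (hxS : x ∉ S) (hxT : x ∉ T) :
    agreeSet T (insert x S) = (agreeSet T S).erase x := by
  ext y
  by_cases hy : y = x
  · subst hy; simp [agreeSet, hxT, hxS]
  · simp [agreeSet, hy, Finset.mem_insert]

lemma sepPref_pref_insert {T S : Finset O} {x : O} (hxS : x ∉ S) :
    (sepPref T).pref (insert x S) S ↔ x ∈ T := by
  letI := oLin O
  show (sepPref T).lt S (insert x S) ↔ x ∈ T
  rw [sepPref_lt_iff]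
  constructor
  · intro h
    by_contra hxT
    rw [agreeSet_insert_of_not_mem hxS hxT] at h
    have hmem : x ∈ agreeSet T S := by simp [agreeSet, hxS, hxT]
    have h2 : @LT.lt _ (colexOrd O).toLT
        (toColex ((agreeSet T S).erase x)) (toColex (agreeSet T S)) :=
      Finset.Colex.toColex_lt_toColex_of_ssubset (Finset.erase_ssubset hmem)
    exact @lt_asymm _ (colexOrd O).toPreorder _ _ h h2
  · intro hxT
    rw [agreeSet_insert_of_mem hxS hxT]
    have hmem : x ∉ agreeSet T S := by simp [agreeSet, hxS, hxT]
    exact Finset.Colex.toColex_lt_toColex_of_ssubset (Finset.ssubset_insert hmem)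

lemma sepPref_separable (T : Finset O) : Separable (sepPref T) := by
  intro S x hxS
  rw [sepPref_pref_insert hxS,
    show ({x} : Finset O) = insert x ∅ from rfl,
    sepPref_pref_insert (Finset.notMem_empty x)]

lemma sepPref_mem_sepDom (T : Finset O) : sepPref T ∈ SepDom O :=
  sepPref_separable T

lemma sepPref_top (T : Finset O) : (sepPref T).top = T := by
  apply (sepPref T).top_eq_of_forall_le
  intro S
  rw [sepPref_le_iff]
  letI := oLin O
  have : agreeSet T S ⊆ agreeSet T T := by
    rw [agreeSet_self]; exact Finset.subset_univ _
  exact Finset.Colex.toColex_le_toColex_of_subset this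

end AuxStmt8
open scoped symmDiff
section FgtComp

variable {O : Type*} [Fintype O] [DecidableEq O]

lemma mem_Fgt {𝒯 : Finset (Finset O)} {x : O} :
    x ∈ Fgt 𝒯 ↔ 𝒯.card < 2 * (𝒯.filter fun T => x ∈ T).card := by
  simp [Fgt]

lemma Fgt_add1 {B : Finset O} {a : O} (haB : a ∉ B) :
    Fgt ({B, insert a B} : Finset (Finset O)) = B := by
  have hXY : B ≠ insert a B := fun h => haB (h ▸ Finset.mem_insert_self a B)
  ext x
  rw [mem_Fgt]
  have hc : ({B, insert a B} : Finset (Finset O)).card = 2 := by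
    rw [Finset.card_insert_of_notMem (by simp [hXY]), Finset.card_singleton]
  have hf : (({B, insert a B} : Finset (Finset O)).filter fun T => x ∈ T).card
      = (if x ∈ B then 1 else 0) + (if x ∈ insert a B then 1 else 0) := by
    rw [Finset.card_filter, Finset.sum_insert (by simp [hXY]), Finset.sum_singleton]
  rw [hc, hf]
  by_cases h4 : x ∈ B <;> by_cases h5 : x = a <;>
    simp_all [Finset.mem_insert] <;> omega

lemma Fgt_add2 {t0 B : Finset O} {a : O} (hat : a ∈ t0) (haB : a ∉ B)
    (h1 : t0 ≠ B) (h2 : t0 ≠ insert a B) :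
    Fgt ({t0, B, insert a B} : Finset (Finset O)) = insert a B := by
  have hXY : B ≠ insert a B := fun h => haB (h ▸ Finset.mem_insert_self a B)
  ext x
  rw [mem_Fgt]
  have hc : ({t0, B, insert a B} : Finset (Finset O)).card = 3 := by
    rw [Finset.card_insert_of_notMem (by simp [h1, h2]),
      Finset.card_insert_of_notMem (by simp [hXY]), Finset.card_singleton]
  have hf : (({t0, B, insert a B} : Finset (Finset O)).filter fun T => x ∈ T).card
      = (if x ∈ t0 then 1 else 0) + ((if x ∈ B then 1 else 0)
        + (if x ∈ insert a B then 1 else 0)) := by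
    rw [Finset.card_filter, Finset.sum_insert (by simp [h1, h2]),
      Finset.sum_insert (by simp [hXY]), Finset.sum_singleton]
  rw [hc, hf]
  by_cases h3 : x ∈ t0 <;> by_cases h4 : x ∈ B <;> by_cases h5 : x = a <;>
    simp_all [Finset.mem_insert] <;> omega

lemma Fgt_rem1 {t0 B : Finset O} {a : O} (haB : a ∈ B) (hat : a ∉ t0) (ht0 : t0.Nonempty) :
    Fgt ({B, B.erase a, B ∆ t0} : Finset (Finset O)) = B := by
  have d1 : B ≠ B.erase a := fun h => Finset.notMem_erase a B (h ▸ haB)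
  have d2 : B ≠ B ∆ t0 := by
    obtain ⟨e, he⟩ := ht0
    intro h
    by_cases heB : e ∈ B
    · have h2 : e ∈ B ∆ t0 := h ▸ heB
      simp [Finset.mem_symmDiff, heB, he] at h2
    · have h2 : e ∈ B ∆ t0 := by simp [Finset.mem_symmDiff, heB, he]
      rw [← h] at h2; exact heB h2
  have d3 : B.erase a ≠ B ∆ t0 := by
    intro h
    have h2 : a ∈ B ∆ t0 := by simp [Finset.mem_symmDiff, haB, hat]
    rw [← h] at h2
    exact Finset.notMem_erase a B h2
  ext x
  rw [mem_Fgt]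
  have hc : ({B, B.erase a, B ∆ t0} : Finset (Finset O)).card = 3 := by
    rw [Finset.card_insert_of_notMem (by simp [d1, d2]),
      Finset.card_insert_of_notMem (by simp [d3]), Finset.card_singleton]
  have hf : (({B, B.erase a, B ∆ t0} : Finset (Finset O)).filter fun T => x ∈ T).card
      = (if x ∈ B then 1 else 0) + ((if x ∈ B.erase a then 1 else 0)
        + (if x ∈ B ∆ t0 then 1 else 0)) := by
    rw [Finset.card_filter, Finset.sum_insert (by simp [d1, d2]),
      Finset.sum_insert (by simp [d3]), Finset.sum_singleton]
  rw [hc, hf]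
  by_cases h3 : x ∈ t0 <;> by_cases h4 : x ∈ B <;> by_cases h5 : x = a <;>
    simp_all [Finset.mem_erase, Finset.mem_symmDiff] <;> omega

lemma Fgt_rem2 {t0 B : Finset O} {a : O} (haB : a ∈ B) (hat : a ∉ t0) (ht0 : t0.Nonempty)
    (hE : B.erase a ≠ t0) :
    Fgt ({t0, B, B.erase a, B ∆ t0} : Finset (Finset O)) = B.erase a := by
  have d1 : B ≠ B.erase a := fun h => Finset.notMem_erase a B (h ▸ haB)
  have d2 : B ≠ B ∆ t0 := by
    obtain ⟨e, he⟩ := ht0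
    intro h
    by_cases heB : e ∈ B
    · have h2 : e ∈ B ∆ t0 := h ▸ heB
      simp [Finset.mem_symmDiff, heB, he] at h2
    · have h2 : e ∈ B ∆ t0 := by simp [Finset.mem_symmDiff, heB, he]
      rw [← h] at h2; exact heB h2
  have d3 : B.erase a ≠ B ∆ t0 := by
    intro h
    have h2 : a ∈ B ∆ t0 := by simp [Finset.mem_symmDiff, haB, hat]
    rw [← h] at h2
    exact Finset.notMem_erase a B h2
  have d4 : t0 ≠ B := fun h => hat (h ▸ haB)
  have d5 : t0 ≠ B.erase a := hE.symm
  have d6 : t0 ≠ B ∆ t0 := by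
    intro h
    have h2 : a ∈ B ∆ t0 := by simp [Finset.mem_symmDiff, haB, hat]
    rw [← h] at h2
    exact hat h2
  ext x
  rw [mem_Fgt]
  have hc : ({t0, B, B.erase a, B ∆ t0} : Finset (Finset O)).card = 4 := by
    rw [Finset.card_insert_of_notMem (by simp [d4, d5, d6]),
      Finset.card_insert_of_notMem (by simp [d1, d2]),
      Finset.card_insert_of_notMem (by simp [d3]), Finset.card_singleton]
  have hf : (({t0, B, B.erase a, B ∆ t0} : Finset (Finset O)).filter fun T => x ∈ T).card
      = (if x ∈ t0 then 1 else 0) + ((if x ∈ B then 1 else 0)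
        + ((if x ∈ B.erase a then 1 else 0) + (if x ∈ B ∆ t0 then 1 else 0))) := by
    rw [Finset.card_filter, Finset.sum_insert (by simp [d4, d5, d6]),
      Finset.sum_insert (by simp [d1, d2]),
      Finset.sum_insert (by simp [d3]), Finset.sum_singleton]
  rw [hc, hf]
  by_cases h3 : x ∈ t0 <;> by_cases h4 : x ∈ B <;> by_cases h5 : x = a <;>
    simp_all [Finset.mem_erase, Finset.mem_symmDiff] <;> omega

end FgtComp
section KeyConstruction

variable {O : Type*} [Fintype O] [DecidableEq O]

lemma key_construction (P0 : Pref (Finset O)) (g : Rule (Finset O))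
    (hg : IsTopsOnlyExtensionOn (SepDom O ∪ {P0}) (fGt O) g)
    (T1 T2 T3 : Finset O)
    (hpref : P0.pref (Fgt ({T1, T2, T3} : Finset (Finset O)))
      (Fgt ({P0.top, T1, T2, T3} : Finset (Finset O)))) :
    ∃ (N : Finset ℕ) (_ : 2 ≤ N.card) (i : ℕ) (hi : i ∈ N) (P : Profile (Finset O) N),
      P.inDomain (SepDom O ∪ {P0}) ∧
      (P i hi).pref (g (N.erase i) (fun j hj => P j (Finset.mem_of_mem_erase hj)))
        (g N P) := by
  classical
  set t0 := P0.top with ht0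
  set N : Finset ℕ := {0, 1, 2, 3} with hN
  have h0 : (0 : ℕ) ∈ N := by simp [hN]
  set P : Profile (Finset O) N := (fun i _ =>
    if i = 0 then P0 else if i = 1 then sepPref T1 else if i = 2 then sepPref T2
      else sepPref T3) with hP
  set Q : Profile (Finset O) N := (fun i _ =>
    if i = 0 then sepPref t0 else if i = 1 then sepPref T1 else if i = 2 then sepPref T2
      else sepPref T3) with hQ
  have hNne : N.Nonempty := ⟨0, h0⟩
  have hPdom : P.inDomain (SepDom O ∪ {P0}) := by
    intro i hi
    simp only [hP]
    split_ifs
    · exact Or.inr rfl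
    all_goals exact Or.inl (sepPref_mem_sepDom _)
  have hQdom : Q.inDomain (SepDom O) := by
    intro i hi
    simp only [hQ]
    split_ifs
    all_goals exact sepPref_mem_sepDom _
  have htops : ∀ i (hi : i ∈ N), (P i hi).top = (Q i hi).top := by
    intro i hi
    simp only [hP, hQ]
    split_ifs <;> simp [sepPref_top, ht0]
  have hgN : g N P = fGt O N Q := hg N hNne P hPdom Q hQdom htops
  have hMne : (N.erase 0).Nonempty := ⟨1, by simp [hN]⟩
  have hPedomBig : Profile.inDomain
      (fun j (hj : j ∈ N.erase 0) => P j (Finset.mem_of_mem_erase hj))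
      (SepDom O ∪ {P0}) :=
    fun j hj => hPdom j (Finset.mem_of_mem_erase hj)
  have hPedomSep : Profile.inDomain
      (fun j (hj : j ∈ N.erase 0) => P j (Finset.mem_of_mem_erase hj)) (SepDom O) := by
    intro j hj
    have hj0 : j ≠ 0 := (Finset.mem_erase.mp hj).1
    simp only [hP, if_neg hj0]
    split_ifs
    all_goals exact sepPref_mem_sepDom _
  have hgM : g (N.erase 0) (fun j hj => P j (Finset.mem_of_mem_erase hj))
      = fGt O (N.erase 0) (fun j hj => P j (Finset.mem_of_mem_erase hj)) :=
    hg (N.erase 0) hMne _ hPedomBig _ hPedomSep (fun i hi => rfl)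
  have hdtQ : distinctTops Q = ({t0, T1, T2, T3} : Finset (Finset O)) := by
    ext x
    rw [mem_distinctTops]
    constructor
    · rintro ⟨i, hi, rfl⟩
      have hi4 : i = 0 ∨ i = 1 ∨ i = 2 ∨ i = 3 := by
        simpa [hN, Finset.mem_insert] using hi
      rcases hi4 with rfl | rfl | rfl | rfl <;>
        simp [hQ, sepPref_top, Finset.mem_insert]
    · intro hx
      simp only [Finset.mem_insert, Finset.mem_singleton] at hx
      rcases hx with rfl | rfl | rfl | rfl
      · exact ⟨0, h0, by simp [hQ, sepPref_top]⟩
      · exact ⟨1, by simp [hN], by simp [hQ, sepPref_top]⟩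
      · exact ⟨2, by simp [hN], by simp [hQ, sepPref_top]⟩
      · exact ⟨3, by simp [hN], by simp [hQ, sepPref_top]⟩
  have hdtPe : distinctTops (fun j (hj : j ∈ N.erase 0) => P j (Finset.mem_of_mem_erase hj))
      = ({T1, T2, T3} : Finset (Finset O)) := by
    ext x
    rw [mem_distinctTops]
    constructor
    · rintro ⟨j, hj, rfl⟩
      have hj0 : j ≠ 0 := (Finset.mem_erase.mp hj).1
      have hj3 : j = 1 ∨ j = 2 ∨ j = 3 := by
        have h4 : j = 0 ∨ j = 1 ∨ j = 2 ∨ j = 3 := by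
          simpa [hN, Finset.mem_insert] using (Finset.mem_erase.mp hj).2
        tauto
      rcases hj3 with rfl | rfl | rfl <;>
        simp [hP, sepPref_top, Finset.mem_insert]
    · intro hx
      simp only [Finset.mem_insert, Finset.mem_singleton] at hx
      rcases hx with rfl | rfl | rfl
      · exact ⟨1, by simp [hN, Finset.mem_erase], by simp [hP, sepPref_top]⟩
      · exact ⟨2, by simp [hN, Finset.mem_erase], by simp [hP, sepPref_top]⟩
      · exact ⟨3, by simp [hN, Finset.mem_erase], by simp [hP, sepPref_top]⟩
  have e1 : g N P = Fgt ({t0, T1, T2, T3} : Finset (Finset O)) := by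
    rw [hgN, fGt_eq_Fgt, hdtQ]
  have e2 : g (N.erase 0) (fun j hj => P j (Finset.mem_of_mem_erase hj))
      = Fgt ({T1, T2, T3} : Finset (Finset O)) := by
    rw [hgM, fGt_eq_Fgt, hdtPe]
  have hcard : 2 ≤ N.card := by rw [hN]; decide
  refine ⟨N, hcard, 0, h0, P, hPdom, ?_⟩
  rw [e1, e2]
  have hP0 : P 0 h0 = P0 := by simp [hP]
  rw [hP0]
  exact hpref

lemma add_case (P0 : Pref (Finset O)) (g : Rule (Finset O))
    (hg : IsTopsOnlyExtensionOn (SepDom O ∪ {P0}) (fGt O) g)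
    {B : Finset O} {a : O} (hat : a ∈ P0.top) (haB : a ∉ B)
    (hpref : P0.pref B (insert a B)) :
    ∃ (N : Finset ℕ) (_ : 2 ≤ N.card) (i : ℕ) (hi : i ∈ N) (P : Profile (Finset O) N),
      P.inDomain (SepDom O ∪ {P0}) ∧
      (P i hi).pref (g (N.erase i) (fun j hj => P j (Finset.mem_of_mem_erase hj)))
        (g N P) := by
  have hne1 : P0.top ≠ B := fun h => haB (h ▸ hat)
  have hne2 : P0.top ≠ insert a B := by
    intro h
    exact P0.not_pref_top B (by rw [h]; exact hpref)
  apply key_construction P0 g hg B (insert a B) (insert a B)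
  have e1 : ({B, insert a B, insert a B} : Finset (Finset O)) = {B, insert a B} := by
    ext y; simp
  rw [e1, Fgt_add1 haB, Fgt_add2 hat haB hne1 hne2]
  exact hpref

open scoped symmDiff in
lemma rem_case (P0 : Pref (Finset O)) (g : Rule (Finset O))
    (hg : IsTopsOnlyExtensionOn (SepDom O ∪ {P0}) (fGt O) g)
    {B : Finset O} {a : O} (haB : a ∈ B) (hat : a ∉ P0.top)
    (htop : P0.top ≠ (∅ : Finset O))
    (hpref : P0.pref B (B.erase a)) :
    ∃ (N : Finset ℕ) (_ : 2 ≤ N.card) (i : ℕ) (hi : i ∈ N) (P : Profile (Finset O) N),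
      P.inDomain (SepDom O ∪ {P0}) ∧
      (P i hi).pref (g (N.erase i) (fun j hj => P j (Finset.mem_of_mem_erase hj)))
        (g N P) := by
  have ht0ne : P0.top.Nonempty := Finset.nonempty_iff_ne_empty.2 htop
  have hE : B.erase a ≠ P0.top := by
    intro h
    exact P0.not_pref_top B (by rw [← h]; exact hpref)
  apply key_construction P0 g hg B (B.erase a) (B ∆ P0.top)
  rw [Fgt_rem1 haB hat ht0ne, Fgt_rem2 haB hat ht0ne hE]
  exact hpref

end KeyConstruction

/-- If `P0` is a non-separable preference whose top set is nonempty,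
then every tops-only extension of `f^>` to the domain `𝒮 ∪ {P0}` violates participation:
some voter of some society strictly prefers the outcome obtained by abstaining. -/
theorem stmt_8 {O : Type*} [Fintype O] [DecidableEq O] (hO : 2 ≤ Fintype.card O)
    (P0 : Pref (Finset O)) (hns : ¬ Separable P0) (htop : P0.top ≠ (∅ : Finset O)) :
    ∀ g : Rule (Finset O), IsTopsOnlyExtensionOn (SepDom O ∪ {P0}) (fGt O) g →
      ∃ (N : Finset ℕ) (_ : 2 ≤ N.card) (i : ℕ) (hi : i ∈ N) (P : Profile (Finset O) N),
        P.inDomain (SepDom O ∪ {P0}) ∧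
        (P i hi).pref (g (N.erase i) (fun j hj => P j (Finset.mem_of_mem_erase hj)))
          (g N P) := by
  intro g hg
  classical
  have total : ∀ u v : Finset O, u ≠ v → ¬ P0.pref u v → P0.pref v u := by
    intro u v huv h
    rcases @lt_trichotomy _ P0 u v with hlt | heq | hgt
    · exact hlt
    · exact absurd heq huv
    · exact absurd hgt h
  have hw : ∃ S x, x ∉ S ∧ ¬ (P0.pref (insert x S) S ↔ P0.pref {x} ∅) := by
    by_contra h
    push_neg at h
    exact hns fun S x hx => h S x hx
  obtain ⟨S, x, hxS, hniff⟩ := hw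
  have hIns : insert x S ≠ S := fun h => hxS (h ▸ Finset.mem_insert_self x S)
  have hsx : ({x} : Finset O) = insert x ∅ := by simp
  by_cases h1 : P0.pref (insert x S) S
  · have h2 : ¬ P0.pref {x} ∅ := fun hb => hniff ⟨fun _ => hb, fun _ => h1⟩
    have h2' : P0.pref ∅ {x} := total {x} ∅ (Finset.singleton_ne_empty x) h2
    by_cases hx0 : x ∈ P0.top
    · apply add_case P0 g hg hx0 (Finset.notMem_empty x)
      rw [← hsx]
      exact h2'
    · apply rem_case P0 g hg (Finset.mem_insert_self x S) hx0 htop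
      rw [Finset.erase_insert hxS]
      exact h1
  · have h1' : P0.pref S (insert x S) := total (insert x S) S hIns h1
    have h2 : P0.pref {x} ∅ := by
      by_contra hb
      exact hniff ⟨fun ha => absurd ha h1, fun hbb => absurd hbb hb⟩
    by_cases hx0 : x ∈ P0.top
    · exact add_case P0 g hg hx0 hxS h1'
    · apply rem_case P0 g hg (Finset.mem_singleton_self x) hx0 htop
      rw [Finset.erase_singleton]
      exact h2
end
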